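/- Let p : ℝ → ℝ be a 1-periodic trigonometric polynomial with ∫₀¹ p(x)dx = 0. Then there is a constant C = C(p) with the following property: for every positive integer n and all naturals m' ≤ m, letting 𝒢_m denote the σ-algebra on [0,1) generated by the dyadic intervals [v/2^m, (v+1)/2^m), v = 0, …, 2^m − 1, there exists a function φ : [0,1) → ℝ that is constant on each interval [v/2^m, (v+1)/2^m), satisfies 𝔼[φ | 𝒢_{m'}] = 0 Lebesgue-almost everywhere, and satisfies sup_{x∈[0,1)} |φ(x) − p(nx)| ≤ C·(n/2^m + 2^{m'}/n). -/

import Mathlib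

open MeasureTheory Finset Real Set

/-- The σ-algebra on ℝ generated by the dyadic intervals [v/2^m, (v+1)/2^m), v = 0,…,2^m − 1. -/
def dyadicSigma (m : ℕ) : MeasurableSpace ℝ :=
  MeasurableSpace.generateFrom
    {s : Set ℝ | ∃ v : ℕ, v < 2 ^ m ∧ s = Set.Ico ((v : ℝ) / 2 ^ m) (((v : ℝ) + 1) / 2 ^ m)}

/-- The mean-zero trigonometric polynomial p(x) = Σ_{j=1}^d (a_j cos(2πjx) + b_j sin(2πjx)). -/
noncomputable def trigPoly (d : ℕ) (a b : ℕ → ℝ) (x : ℝ) : ℝ :=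
  ∑ j ∈ Finset.Icc 1 d,
    (a j * Real.cos (2 * Real.pi * j * x) + b j * Real.sin (2 * Real.pi * j * x))

noncomputable def Msup (d : ℕ) (a b : ℕ → ℝ) : ℝ := ∑ j ∈ Finset.Icc 1 d, (|a j| + |b j|)

noncomputable def Lcon (d : ℕ) (a b : ℕ → ℝ) : ℝ :=
  ∑ j ∈ Finset.Icc 1 d, (|a j| + |b j|) * (2 * Real.pi * j)

lemma Msup_nonneg (d : ℕ) (a b : ℕ → ℝ) : 0 ≤ Msup d a b :=
  Finset.sum_nonneg fun j _ => by positivity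

lemma Lcon_nonneg (d : ℕ) (a b : ℕ → ℝ) : 0 ≤ Lcon d a b :=
  Finset.sum_nonneg fun j _ => by positivity

lemma abs_cos_sub_cos (u v : ℝ) : |Real.cos u - Real.cos v| ≤ |u - v| := by
  rw [Real.cos_sub_cos]
  have h1 : |Real.sin ((u + v) / 2)| ≤ 1 := Real.abs_sin_le_one _
  have h2 : |Real.sin ((u - v) / 2)| ≤ |(u - v) / 2| := Real.abs_sin_le_abs
  calc |(-2) * Real.sin ((u + v) / 2) * Real.sin ((u - v) / 2)|
      = 2 * |Real.sin ((u + v) / 2)| * |Real.sin ((u - v) / 2)| := by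
        rw [abs_mul, abs_mul]; norm_num
    _ ≤ 2 * 1 * |(u - v) / 2| := by
        apply mul_le_mul _ h2 (abs_nonneg _) (by norm_num)
        exact mul_le_mul_of_nonneg_left h1 (by norm_num)
    _ = |u - v| := by rw [abs_div, abs_two]; ring

lemma abs_sin_sub_sin (u v : ℝ) : |Real.sin u - Real.sin v| ≤ |u - v| := by
  rw [Real.sin_sub_sin]
  have h1 : |Real.cos ((u + v) / 2)| ≤ 1 := Real.abs_cos_le_one _
  have h2 : |Real.sin ((u - v) / 2)| ≤ |(u - v) / 2| := Real.abs_sin_le_abs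
  calc |2 * Real.sin ((u - v) / 2) * Real.cos ((u + v) / 2)|
      = 2 * |Real.sin ((u - v) / 2)| * |Real.cos ((u + v) / 2)| := by
        rw [abs_mul, abs_mul]; norm_num
    _ ≤ 2 * |(u - v) / 2| * 1 := by
        apply mul_le_mul _ h1 (abs_nonneg _) (by positivity)
        exact mul_le_mul_of_nonneg_left h2 (by norm_num)
    _ = |u - v| := by rw [abs_div, abs_two]; ring

lemma trigPoly_bound (d : ℕ) (a b : ℕ → ℝ) (x : ℝ) : |trigPoly d a b x| ≤ Msup d a b := by
  refine (Finset.abs_sum_le_sum_abs _ _).trans (Finset.sum_le_sum fun j _ => ?_)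
  calc |a j * Real.cos (2 * Real.pi * j * x) + b j * Real.sin (2 * Real.pi * j * x)|
      ≤ |a j * Real.cos (2 * Real.pi * j * x)| + |b j * Real.sin (2 * Real.pi * j * x)| :=
        abs_add_le _ _
    _ ≤ |a j| + |b j| := by
        rw [abs_mul, abs_mul]
        gcongr
        · exact (mul_le_of_le_one_right (abs_nonneg _) (Real.abs_cos_le_one _))
        · exact (mul_le_of_le_one_right (abs_nonneg _) (Real.abs_sin_le_one _))

lemma trigPoly_lip (d : ℕ) (a b : ℕ → ℝ) (x y : ℝ) :
    |trigPoly d a b x - trigPoly d a b y| ≤ Lcon d a b * |x - y| := by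
  unfold trigPoly
  rw [← Finset.sum_sub_distrib, Lcon, Finset.sum_mul]
  refine (Finset.abs_sum_le_sum_abs _ _).trans (Finset.sum_le_sum fun j hj => ?_)
  have hj1 : (1:ℝ) ≤ j := by
    have := (Finset.mem_Icc.1 hj).1; exact_mod_cast this
  have hc : |2 * Real.pi * j * x - 2 * Real.pi * j * y| = 2 * Real.pi * j * |x - y| := by
    rw [← mul_sub, abs_mul]
    congr 1
    rw [abs_of_nonneg]; positivity
  calc |a j * Real.cos (2 * Real.pi * j * x) + b j * Real.sin (2 * Real.pi * j * x) -
        (a j * Real.cos (2 * Real.pi * j * y) + b j * Real.sin (2 * Real.pi * j * y))|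
      = |a j * (Real.cos (2 * Real.pi * j * x) - Real.cos (2 * Real.pi * j * y)) +
         b j * (Real.sin (2 * Real.pi * j * x) - Real.sin (2 * Real.pi * j * y))| := by ring_nf
    _ ≤ |a j| * |Real.cos (2 * Real.pi * j * x) - Real.cos (2 * Real.pi * j * y)| +
        |b j| * |Real.sin (2 * Real.pi * j * x) - Real.sin (2 * Real.pi * j * y)| := by
        refine (abs_add_le _ _).trans ?_; rw [abs_mul, abs_mul]
    _ ≤ |a j| * (2 * Real.pi * j * |x - y|) + |b j| * (2 * Real.pi * j * |x - y|) := by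
        gcongr
        · exact (abs_cos_sub_cos _ _).trans_eq hc
        · exact (abs_sin_sub_sin _ _).trans_eq hc
    _ = (|a j| + |b j|) * (2 * Real.pi * ↑j) * |x - y| := by ring

lemma trigPoly_continuous (d : ℕ) (a b : ℕ → ℝ) : Continuous (trigPoly d a b) := by
  unfold trigPoly
  exact continuous_finset_sum _ fun j _ => by fun_prop

lemma trigPoly_integral_bound (d : ℕ) (a b : ℕ → ℝ) (A B : ℝ) :
    |∫ x in A..B, trigPoly d a b x| ≤ Msup d a b := by
  unfold trigPoly
  rw [intervalIntegral.integral_finset_sum (fun j _ => by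
    apply Continuous.intervalIntegrable; fun_prop)]
  refine (Finset.abs_sum_le_sum_abs _ _).trans (Finset.sum_le_sum fun j hj => ?_)
  have hj1 : 1 ≤ j := (Finset.mem_Icc.1 hj).1
  have hjR : (1:ℝ) ≤ (j:ℝ) := by exact_mod_cast hj1
  have hc : (2 * Real.pi * (j:ℝ)) ≠ 0 := by positivity
  have hcos : ∫ x in A..B, Real.cos (2 * Real.pi * j * x) =
      (2 * Real.pi * (j:ℝ))⁻¹ * (Real.sin (2 * Real.pi * j * B) - Real.sin (2 * Real.pi * j * A)) := by
    have := intervalIntegral.integral_comp_mul_left (f := Real.cos) (a := A) (b := B) hc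
    rw [this, integral_cos]; simp [smul_eq_mul]
  have hsin : ∫ x in A..B, Real.sin (2 * Real.pi * j * x) =
      (2 * Real.pi * (j:ℝ))⁻¹ * (Real.cos (2 * Real.pi * j * A) - Real.cos (2 * Real.pi * j * B)) := by
    have := intervalIntegral.integral_comp_mul_left (f := Real.sin) (a := A) (b := B) hc
    rw [this, integral_sin]; simp [smul_eq_mul]
  rw [intervalIntegral.integral_add (by apply Continuous.intervalIntegrable; fun_prop)
      (by apply Continuous.intervalIntegrable; fun_prop),
    intervalIntegral.integral_const_mul, intervalIntegral.integral_const_mul, hcos, hsin]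
  have hinv : (2 * Real.pi * (j:ℝ))⁻¹ ≤ 2⁻¹ := by
    apply inv_anti₀ (by norm_num)
    have := Real.pi_gt_three
    nlinarith
  have h2 : |Real.sin (2 * Real.pi * j * B) - Real.sin (2 * Real.pi * j * A)| ≤ 2 := by
    refine (abs_sub _ _).trans ?_
    have := Real.abs_sin_le_one (2 * Real.pi * j * B)
    have := Real.abs_sin_le_one (2 * Real.pi * j * A)
    linarith
  have h2' : |Real.cos (2 * Real.pi * j * A) - Real.cos (2 * Real.pi * j * B)| ≤ 2 := by
    refine (abs_sub _ _).trans ?_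
    have := Real.abs_cos_le_one (2 * Real.pi * j * B)
    have := Real.abs_cos_le_one (2 * Real.pi * j * A)
    linarith
  have hinvnn : (0:ℝ) ≤ (2 * Real.pi * (j:ℝ))⁻¹ := by positivity
  calc |a j * ((2 * Real.pi * (j:ℝ))⁻¹ * (Real.sin (2 * Real.pi * j * B) - Real.sin (2 * Real.pi * j * A))) +
        b j * ((2 * Real.pi * (j:ℝ))⁻¹ * (Real.cos (2 * Real.pi * j * A) - Real.cos (2 * Real.pi * j * B)))|
      ≤ |a j| * ((2 * Real.pi * (j:ℝ))⁻¹ * |Real.sin (2 * Real.pi * j * B) - Real.sin (2 * Real.pi * j * A)|) +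
        |b j| * ((2 * Real.pi * (j:ℝ))⁻¹ * |Real.cos (2 * Real.pi * j * A) - Real.cos (2 * Real.pi * j * B)|) := by
        refine (abs_add_le _ _).trans ?_
        rw [abs_mul, abs_mul, abs_mul, abs_mul, abs_of_nonneg hinvnn]
    _ ≤ |a j| * (2⁻¹ * 2) + |b j| * (2⁻¹ * 2) := by
        gcongr
    _ ≤ |a j| + |b j| := by norm_num

set_option maxHeartbeats 1000000 in
theorem dyadic_martingale_approximation (d : ℕ) (a b : ℕ → ℝ) :
    ∃ C : ℝ, 0 < C ∧ ∀ n : ℕ, 0 < n → ∀ m' m : ℕ, m' ≤ m →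
      ∃ φ : ℝ → ℝ,
        (∀ v : ℕ, v < 2 ^ m →
          ∀ x ∈ Set.Ico ((v : ℝ) / 2 ^ m) (((v : ℝ) + 1) / 2 ^ m),
          ∀ y ∈ Set.Ico ((v : ℝ) / 2 ^ m) (((v : ℝ) + 1) / 2 ^ m), φ x = φ y) ∧
        ((volume.restrict (Set.Ico (0:ℝ) 1))[φ | dyadicSigma m']
          =ᵐ[volume.restrict (Set.Ico (0:ℝ) 1)] 0) ∧
        (∀ x ∈ Set.Ico (0:ℝ) 1,
          |φ x - trigPoly d a b ((n : ℝ) * x)| ≤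
            C * ((n : ℝ) / 2 ^ m + (2 : ℝ) ^ m' / (n : ℝ))) := by
  have hM := Msup_nonneg d a b
  have hL := Lcon_nonneg d a b
  refine ⟨Lcon d a b + Msup d a b + 1, by linarith, ?_⟩
  intro n hn m' m hmm
  obtain ⟨e, rfl⟩ : ∃ e, m = m' + e := ⟨m - m', (Nat.add_sub_cancel' hmm).symm⟩
  set m := m' + e with hm
  have hnR : (0:ℝ) < n := by exact_mod_cast hn
  have h2k : ∀ k : ℕ, (0:ℝ) < 2 ^ k := fun k => by positivity
  set p : ℝ → ℝ := trigPoly d a b with hp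
  set q : ℝ → ℝ := fun t => p (n * t) with hq
  have hq_cont : Continuous q := (trigPoly_continuous d a b).comp (by fun_prop)
  have hq_int : ∀ A B : ℝ, IntervalIntegrable q volume A B :=
    fun A B => hq_cont.intervalIntegrable A B
  set g : ℕ → ℝ → ℝ := fun k x =>
    (2:ℝ)^k * ∫ t in ((⌊(2:ℝ)^k * x⌋ : ℝ)/2^k)..((⌊(2:ℝ)^k * x⌋ + 1 : ℝ)/2^k), q t with hg
  set φ : ℝ → ℝ := fun x => g m x - g m' x with hφ
  -- floor identification
  have floor_eq : ∀ (k : ℕ) (z : ℤ) (x : ℝ),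
      (z:ℝ)/2^k ≤ x → x < ((z:ℝ)+1)/2^k → ⌊(2:ℝ)^k * x⌋ = z := by
    intro k z x h1 h2
    rw [Int.floor_eq_iff]
    constructor
    · rw [div_le_iff₀ (h2k k)] at h1; linarith [h1]
    · rw [lt_div_iff₀ (h2k k)] at h2; push_cast; linarith [h2]
  have gval : ∀ (k : ℕ) (z : ℤ) (x : ℝ), (z:ℝ)/2^k ≤ x → x < ((z:ℝ)+1)/2^k →
      g k x = (2:ℝ)^k * ∫ t in ((z:ℝ)/2^k)..(((z:ℝ)+1)/2^k), q t := by
    intro k z x h1 h2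
    simp only [hg, floor_eq k z x h1 h2]
  have hgmem : ∀ (k : ℕ) (x : ℝ),
      ((⌊(2:ℝ)^k * x⌋ : ℝ)/2^k) ≤ x ∧ x < ((⌊(2:ℝ)^k * x⌋ + 1 : ℝ)/2^k) := by
    intro k x
    constructor
    · rw [div_le_iff₀ (h2k k)]
      calc ((⌊(2:ℝ)^k * x⌋ : ℝ)) ≤ (2:ℝ)^k * x := Int.floor_le _
        _ = x * 2^k := mul_comm _ _
    · rw [lt_div_iff₀ (h2k k)]
      calc x * 2^k = 2^k * x := mul_comm _ _
        _ < ⌊(2:ℝ)^k * x⌋ + 1 := Int.lt_floor_add_one _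
  -- substitution bound
  have hqint_bound : ∀ A B : ℝ, |∫ t in A..B, q t| ≤ Msup d a b / n := by
    intro A B
    have hne : ((n:ℝ)) ≠ 0 := ne_of_gt hnR
    have : ∫ t in A..B, q t = (n:ℝ)⁻¹ • ∫ u in (n:ℝ)*A..(n:ℝ)*B, p u :=
      intervalIntegral.integral_comp_mul_left p hne
    rw [this, smul_eq_mul, abs_mul, abs_inv, abs_of_nonneg hnR.le]
    rw [div_eq_inv_mul]
    exact mul_le_mul_of_nonneg_left (trigPoly_integral_bound d a b _ _) (by positivity)
  have hgbound : ∀ (k : ℕ) (x : ℝ), |g k x| ≤ Msup d a b * 2^k / n := by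
    intro k x
    rw [hg]
    simp only
    rw [abs_mul, abs_of_nonneg (h2k k).le]
    calc (2:ℝ)^k * |∫ t in ((⌊(2:ℝ)^k * x⌋ : ℝ)/2^k)..((⌊(2:ℝ)^k * x⌋ + 1 : ℝ)/2^k), q t|
        ≤ 2^k * (Msup d a b / n) := by
          exact mul_le_mul_of_nonneg_left (hqint_bound _ _) (h2k k).le
      _ = Msup d a b * 2^k / n := by ring
  -- measurability
  have hg_meas : ∀ k : ℕ, Measurable (g k) := by
    intro k
    have : g k = (fun z : ℤ => (2:ℝ)^k * ∫ t in ((z:ℝ)/2^k)..(((z:ℝ)+1)/2^k), q t)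
        ∘ (fun x : ℝ => ⌊(2:ℝ)^k * x⌋) := by
      funext x; simp [hg]
    rw [this]
    exact measurable_from_top.comp ((measurable_const_mul _).floor)
  have hg_ii : ∀ (k : ℕ) (A B : ℝ), IntervalIntegrable (g k) volume A B := by
    intro k A B
    refine (intervalIntegrable_const (c := Msup d a b * 2^k / n)).mono_fun
      ((hg_meas k).aestronglyMeasurable.restrict) ?_
    refine ae_of_all _ fun x => ?_
    simp only [Real.norm_eq_abs]
    exact (hgbound k x).trans_eq (abs_of_nonneg (by positivity)).symm
  -- one dyadic cell
  have ONE : ∀ (k : ℕ) (z : ℤ),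
      ∫ x in ((z:ℝ)/2^k)..(((z:ℝ)+1)/2^k), g k x =
      ∫ t in ((z:ℝ)/2^k)..(((z:ℝ)+1)/2^k), q t := by
    intro k z
    have hαβ : (z:ℝ)/2^k < ((z:ℝ)+1)/2^k := by
      have h := h2k k
      rw [div_lt_div_iff₀ h h]
      nlinarith
    have hlen : ((z:ℝ)+1)/2^k - (z:ℝ)/2^k = 1/2^k := by field_simp; ring
    have h0 : ∀ᵐ (x:ℝ) ∂volume, x ≠ ((z:ℝ)+1)/2^k :=
      measure_eq_zero_iff_ae_notMem.mp (measure_singleton _)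
    have hae : ∀ᵐ (x:ℝ) ∂volume,
        x ∈ Set.uIoc ((z:ℝ)/2^k) (((z:ℝ)+1)/2^k) →
        g k x = (2:ℝ)^k * ∫ t in ((z:ℝ)/2^k)..(((z:ℝ)+1)/2^k), q t := by
      filter_upwards [h0] with x hx hmem
      rw [Set.uIoc_of_le hαβ.le] at hmem
      exact gval k z x hmem.1.le (lt_of_le_of_ne hmem.2 hx)
    rw [intervalIntegral.integral_congr_ae hae, intervalIntegral.integral_const,
      hlen, smul_eq_mul]
    field_simp
  -- many adjacent cells
  have STEP : ∀ (k : ℕ) (u c : ℕ),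
      ∫ x in ((u:ℝ)/2^k)..(((u:ℝ)+(c:ℝ))/2^k), g k x =
      ∫ t in ((u:ℝ)/2^k)..(((u:ℝ)+(c:ℝ))/2^k), q t := by
    intro k u c
    set aa : ℕ → ℝ := fun i => ((u:ℝ)+(i:ℝ))/2^k with haa
    have ha0 : aa 0 = (u:ℝ)/2^k := by simp [haa]
    have hac : aa c = ((u:ℝ)+(c:ℝ))/2^k := rfl
    have h2 := intervalIntegral.sum_integral_adjacent_intervals
      (a := aa) (f := g k) (μ := volume) (n := c) (fun i _ => hg_ii k _ _)
    have h3 := intervalIntegral.sum_integral_adjacent_intervals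
      (a := aa) (f := q) (μ := volume) (n := c) (fun i _ => hq_int _ _)
    rw [← ha0, ← hac, ← h2, ← h3]
    refine Finset.sum_congr rfl fun i _ => ?_
    have := ONE k ((u:ℤ)+(i:ℤ))
    have e1 : aa i = (((u:ℤ)+(i:ℤ) : ℤ):ℝ)/2^k := by push_cast [haa]; ring
    have e2 : aa (i+1) = ((((u:ℤ)+(i:ℤ) : ℤ):ℝ)+1)/2^k := by push_cast [haa]; ring
    rw [e1, e2, this]
  -- integral of φ over each level-m' cell vanishes
  have ZERO : ∀ v : ℕ,
      ∫ x in ((v:ℝ)/2^m')..(((v:ℝ)+1)/2^m'), φ x = 0 := by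
    intro v
    have e2m : (2:ℝ)^m = 2^m' * 2^e := by rw [hm, pow_add]
    have eα : ((v:ℝ)/2^m') = (((v * 2^e : ℕ):ℝ))/2^m := by
      push_cast [e2m]
      field_simp
    have eβ : (((v:ℝ)+1)/2^m') = ((((v * 2^e : ℕ)):ℝ)+((2^e : ℕ):ℝ))/2^m := by
      push_cast [e2m]
      field_simp
    have hgm : ∫ x in ((v:ℝ)/2^m')..(((v:ℝ)+1)/2^m'), g m x =
        ∫ t in ((v:ℝ)/2^m')..(((v:ℝ)+1)/2^m'), q t := by
      rw [eα, eβ]; exact STEP m (v * 2^e) (2^e)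
    have hgm' : ∫ x in ((v:ℝ)/2^m')..(((v:ℝ)+1)/2^m'), g m' x =
        ∫ t in ((v:ℝ)/2^m')..(((v:ℝ)+1)/2^m'), q t := by
      have := ONE m' (v:ℤ)
      push_cast at this
      exact this
    rw [hφ]
    rw [intervalIntegral.integral_sub (hg_ii m _ _) (hg_ii m' _ _), hgm, hgm', sub_self]
  -- total integral of φ over [0,1) vanishes
  have TOT : ∫ x in (0:ℝ)..1, φ x = 0 := by
    have h01 : ∀ k : ℕ, ((0:ℕ):ℝ)/2^k = 0 := by intro k; simp
    have h11 : ∀ k : ℕ, (((0:ℕ):ℝ)+((2^k : ℕ):ℝ))/2^k = 1 := by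
      intro k; push_cast; rw [zero_add, div_self (ne_of_gt (h2k k))]
    have hgm : ∫ x in (0:ℝ)..1, g m x = ∫ t in (0:ℝ)..1, q t := by
      have := STEP m 0 (2^m); rwa [h01, h11] at this
    have hgm' : ∫ x in (0:ℝ)..1, g m' x = ∫ t in (0:ℝ)..1, q t := by
      have := STEP m' 0 (2^m'); rwa [h01, h11] at this
    rw [hφ]
    rw [intervalIntegral.integral_sub (hg_ii m _ _) (hg_ii m' _ _), hgm, hgm', sub_self]
  -- measure setup
  set μ : Measure ℝ := volume.restrict (Set.Ico (0:ℝ) 1) with hμ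
  haveI : IsFiniteMeasure μ := by
    constructor
    rw [hμ, Measure.restrict_apply_univ, Real.volume_Ico]
    simp
  have hle : dyadicSigma m' ≤ (inferInstance : MeasurableSpace ℝ) := by
    apply MeasurableSpace.generateFrom_le
    rintro s ⟨v, hv, rfl⟩
    exact measurableSet_Ico
  have hφ_meas : Measurable φ := (hg_meas m).sub (hg_meas m')
  set K : ℝ := Msup d a b * 2^m / n + Msup d a b * 2^m' / n with hK
  have hφ_bd : ∀ x, |φ x| ≤ K := by
    intro x
    rw [hφ]
    exact (abs_sub _ _).trans (add_le_add (hgbound m x) (hgbound m' x))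
  have hφ_int : Integrable φ μ := by
    refine Integrable.mono' (integrable_const K) hφ_meas.aestronglyMeasurable
      (ae_of_all _ fun x => ?_)
    exact hφ_bd x
  -- translate interval integrals into set integrals w.r.t. μ
  have cellint : ∀ v : ℕ, v < 2^m' →
      ∫ x in Set.Ico ((v:ℝ)/2^m') (((v:ℝ)+1)/2^m'), φ x ∂μ = 0 := by
    intro v hv
    have hsub : Set.Ico ((v:ℝ)/2^m') (((v:ℝ)+1)/2^m') ⊆ Set.Ico (0:ℝ) 1 := by
      apply Set.Ico_subset_Ico
      · positivity
      · rw [div_le_one (h2k m')]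
        have : (v:ℝ) + 1 ≤ (2:ℝ)^m' := by exact_mod_cast Nat.succ_le_of_lt hv
        push_cast
        linarith
    have hab : ((v:ℝ)/2^m') ≤ (((v:ℝ)+1)/2^m') := by
      gcongr
      linarith
    rw [Measure.restrict_restrict measurableSet_Ico, Set.inter_eq_left.2 hsub,
      restrict_Ico_eq_restrict_Ioc, ← intervalIntegral.integral_of_le hab]
    exact ZERO v
  have totint : ∫ x, φ x ∂μ = 0 := by
    rw [hμ, restrict_Ico_eq_restrict_Ioc,
      ← intervalIntegral.integral_of_le (by norm_num : (0:ℝ) ≤ 1)]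
    exact TOT
  -- set integrals over the dyadic σ-algebra vanish
  have setint : ∀ s : Set ℝ, MeasurableSet[dyadicSigma m'] s → ∫ x in s, φ x ∂μ = 0 := by
    have hπ : IsPiSystem {s : Set ℝ | ∃ v : ℕ, v < 2 ^ m' ∧
        s = Set.Ico ((v : ℝ) / 2 ^ m') (((v : ℝ) + 1) / 2 ^ m')} := by
      rintro s ⟨v, hv, rfl⟩ t ⟨w, hw, rfl⟩ hne
      have hvw : v = w := by
        obtain ⟨x, hx1, hx2⟩ := hne
        have h1 : (v:ℝ)/2^m' < ((w:ℝ)+1)/2^m' := lt_of_le_of_lt hx1.1 hx2.2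
        have h2 : (w:ℝ)/2^m' < ((v:ℝ)+1)/2^m' := lt_of_le_of_lt hx2.1 hx1.2
        rw [div_lt_div_iff₀ (h2k m') (h2k m')] at h1 h2
        have h1' : (v:ℝ) < (w:ℝ) + 1 := by nlinarith [h2k m']
        have h2' : (w:ℝ) < (v:ℝ) + 1 := by nlinarith [h2k m']
        have : v < w + 1 := by exact_mod_cast h1'
        have : w < v + 1 := by exact_mod_cast h2'
        omega
      subst hvw
      rw [Set.inter_self]
      exact ⟨v, hv, rfl⟩
    intro s hs
    refine MeasurableSpace.induction_on_inter (m := dyadicSigma m')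
      (C := fun t _ => ∫ x in t, φ x ∂μ = 0) rfl hπ ?_ ?_ ?_ ?_ s hs
    · simp
    · rintro t ⟨v, hv, rfl⟩
      exact cellint v hv
    · intro t ht h0
      have hb : MeasurableSet t := hle _ ht
      have := integral_add_compl hb hφ_int (f := φ)
      rw [h0, totint] at this
      linarith
    · intro f hdisj hmeas h0
      rw [integral_iUnion (fun i => hle _ (hmeas i)) hdisj hφ_int.integrableOn]
      exact (tsum_congr h0).trans tsum_zero
  -- conditional expectation vanishes
  haveI : SigmaFinite (μ.trim hle) := by
    haveI := isFiniteMeasure_trim (μ := μ) hle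
    infer_instance
  have hcond : μ[φ | dyadicSigma m'] =ᵐ[μ] 0 := by
    refine (ae_eq_condExp_of_forall_setIntegral_eq hle hφ_int
      (fun s _ _ => integrableOn_zero) (fun s hsm _ => ?_) ?_).symm
    · rw [setint s hsm]
      simp
    · exact StronglyMeasurable.aestronglyMeasurable (@stronglyMeasurable_zero ℝ ℝ (dyadicSigma m') _ _)
  -- constancy of g on dyadic cells
  have gconst : ∀ (k : ℕ) (z : ℤ) (x : ℝ), (z:ℝ)/2^k ≤ x → x < ((z:ℝ)+1)/2^k →
      ∀ (y : ℝ), (z:ℝ)/2^k ≤ y → y < ((z:ℝ)+1)/2^k → g k x = g k y := by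
    intro k z x hx1 hx2 y hy1 hy2
    rw [gval k z x hx1 hx2, gval k z y hy1 hy2]
  have constancy : ∀ v : ℕ, v < 2 ^ m →
      ∀ x ∈ Set.Ico ((v : ℝ) / 2 ^ m) (((v : ℝ) + 1) / 2 ^ m),
      ∀ y ∈ Set.Ico ((v : ℝ) / 2 ^ m) (((v : ℝ) + 1) / 2 ^ m), φ x = φ y := by
    intro v hv x hx y hy
    have e2m : (2:ℝ)^m = 2^m' * 2^e := by rw [hm, pow_add]
    set w : ℕ := v / 2^e with hw
    have hw1 : w * 2^e ≤ v := Nat.div_mul_le_self v (2^e)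
    have hw2 : v < (w + 1) * 2^e := by
      have hmod : v % 2^e < 2^e := Nat.mod_lt _ (Nat.pow_pos (by norm_num))
      have h1 : 2^e * w + v % 2^e = v := Nat.div_add_mod v (2^e)
      calc v = 2^e * w + v % 2^e := h1.symm
        _ < 2^e * w + 2^e := by linarith
        _ = (w + 1) * 2^e := by ring
    -- the level-m cell sits inside the level-m' cell [w/2^m', (w+1)/2^m')
    have hsub1 : ((w:ℝ))/2^m' ≤ (v:ℝ)/2^m := by
      rw [div_le_div_iff₀ (h2k m') (h2k m), e2m]
      have : ((w:ℝ)) * 2^e ≤ (v:ℝ) := by exact_mod_cast hw1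
      nlinarith [h2k m', h2k e]
    have hsub2 : ((v:ℝ)+1)/2^m ≤ ((w:ℝ)+1)/2^m' := by
      rw [div_le_div_iff₀ (h2k m) (h2k m'), e2m]
      have : (v:ℝ) + 1 ≤ ((w:ℝ) + 1) * 2^e := by exact_mod_cast hw2
      nlinarith [h2k m', h2k e]
    have hxw1 : ((w:ℤ):ℝ)/2^m' ≤ x := by push_cast; exact le_trans hsub1 hx.1
    have hxw2 : x < (((w:ℤ):ℝ)+1)/2^m' := by push_cast; exact lt_of_lt_of_le hx.2 hsub2
    have hyw1 : ((w:ℤ):ℝ)/2^m' ≤ y := by push_cast; exact le_trans hsub1 hy.1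
    have hyw2 : y < (((w:ℤ):ℝ)+1)/2^m' := by push_cast; exact lt_of_lt_of_le hy.2 hsub2
    have hxv1 : ((v:ℤ):ℝ)/2^m ≤ x := by push_cast; exact hx.1
    have hxv2 : x < (((v:ℤ):ℝ)+1)/2^m := by push_cast; exact hx.2
    have hyv1 : ((v:ℤ):ℝ)/2^m ≤ y := by push_cast; exact hy.1
    have hyv2 : y < (((v:ℤ):ℝ)+1)/2^m := by push_cast; exact hy.2
    rw [hφ]
    simp only
    rw [gconst m (v:ℤ) x hxv1 hxv2 y hyv1 hyv2,
      gconst m' (w:ℤ) x hxw1 hxw2 y hyw1 hyw2]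
  -- the approximation bound
  have approx : ∀ x ∈ Set.Ico (0:ℝ) 1,
      |φ x - p ((n : ℝ) * x)| ≤
        (Lcon d a b + Msup d a b + 1) * ((n : ℝ) / 2 ^ m + (2 : ℝ) ^ m' / (n : ℝ)) := by
    intro x _
    have hz := hgmem m x
    set z : ℤ := ⌊(2:ℝ)^m * x⌋ with hzdef
    have hlen : ((z:ℝ)+1)/2^m - (z:ℝ)/2^m = 1/2^m := by field_simp; ring
    have key : g m x - q x = (2:ℝ)^m * ∫ t in ((z:ℝ)/2^m)..(((z:ℝ)+1)/2^m), (q t - q x) := by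
      rw [intervalIntegral.integral_sub (hq_int _ _) (intervalIntegrable_const),
        intervalIntegral.integral_const, smul_eq_mul, hlen, gval m z x hz.1 hz.2]
      field_simp
    have hbd : ∀ t ∈ Set.uIoc ((z:ℝ)/2^m) (((z:ℝ)+1)/2^m),
        ‖q t - q x‖ ≤ Lcon d a b * n * (1/2^m) := by
      intro t ht
      have hab : (z:ℝ)/2^m ≤ ((z:ℝ)+1)/2^m := by
        rw [div_le_div_iff₀ (h2k m) (h2k m)]; nlinarith [h2k m]
      rw [Set.uIoc_of_le hab] at ht
      have htx : |t - x| ≤ 1/2^m := by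
        rw [abs_le]
        constructor
        · have := hz.2; have := ht.1; linarith [hlen]
        · have := hz.1; have := ht.2; linarith [hlen]
      calc ‖q t - q x‖ = |p ((n:ℝ) * t) - p ((n:ℝ) * x)| := rfl
        _ ≤ Lcon d a b * |(n:ℝ) * t - (n:ℝ) * x| := trigPoly_lip d a b _ _
        _ = Lcon d a b * ((n:ℝ) * |t - x|) := by
            rw [← mul_sub, abs_mul, abs_of_nonneg hnR.le]
        _ ≤ Lcon d a b * ((n:ℝ) * (1/2^m)) := by
            have := mul_le_mul_of_nonneg_left htx hnR.le
            exact mul_le_mul_of_nonneg_left this hL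
        _ = Lcon d a b * n * (1/2^m) := by ring
    have habs : |g m x - q x| ≤ Lcon d a b * n / 2^m := by
      rw [key, abs_mul, abs_of_nonneg (h2k m).le]
      have hni := intervalIntegral.norm_integral_le_of_norm_le_const hbd
      rw [Real.norm_eq_abs] at hni
      have h1 : |((z:ℝ)+1)/2^m - (z:ℝ)/2^m| = 1/2^m := by
        rw [hlen, abs_of_pos (by positivity)]
      rw [h1] at hni
      calc (2:ℝ)^m * |∫ t in ((z:ℝ)/2^m)..(((z:ℝ)+1)/2^m), (q t - q x)|
          ≤ 2^m * (Lcon d a b * n * (1/2^m) * (1/2^m)) :=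
            mul_le_mul_of_nonneg_left hni (h2k m).le
        _ = Lcon d a b * n / 2^m := by
            have h2m := (h2k m).ne'
            field_simp
    have hb2 : |g m' x| ≤ Msup d a b * 2^m' / n := hgbound m' x
    have hqx : q x = p ((n:ℝ) * x) := rfl
    have hsplit : φ x - p ((n:ℝ) * x) = (g m x - q x) - g m' x := by
      simp only [hφ]
      rw [← hqx]
      ring
    calc |φ x - p ((n:ℝ) * x)| ≤ |g m x - q x| + |g m' x| := by
          rw [hsplit]; exact abs_sub _ _
      _ ≤ Lcon d a b * n / 2^m + Msup d a b * 2^m' / n := add_le_add habs hb2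
      _ ≤ (Lcon d a b + Msup d a b + 1) * ((n : ℝ) / 2 ^ m + (2 : ℝ) ^ m' / (n : ℝ)) := by
          have t1 : 0 ≤ (n:ℝ)/2^m := by positivity
          have t2 : 0 ≤ (2:ℝ)^m'/(n:ℝ) := by positivity
          have e1 : Lcon d a b * n / 2^m = Lcon d a b * ((n:ℝ)/2^m) := by ring
          have e2 : Msup d a b * 2^m' / n = Msup d a b * ((2:ℝ)^m'/(n:ℝ)) := by ring
          rw [e1, e2]
          nlinarith [mul_nonneg hL t2, mul_nonneg hM t1]
  exact ⟨φ, constancy, hcond, approx⟩
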